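/- A k×k matrix M with positive integer entries satisfying M² = 3M has trace 3 and rank 1. -/

import Mathlib

/-- A `k×k` matrix with positive integer entries satisfying `M² = 3M` has trace `3` and
rank `1` (computed over `ℚ`). -/
theorem stmt_8 {ι : Type} [Fintype ι] [DecidableEq ι] [Nonempty ι]
    (M : Matrix ι ι ℤ) (hpos : ∀ i j, 0 < M i j) (hM : M * M = (3 : ℤ) • M) :
    Matrix.trace M = 3 ∧ (M.map (Int.cast : ℤ → ℚ)).rank = 1 := by
  classical
  set A : Matrix ι ι ℚ := M.map (Int.cast : ℤ → ℚ) with hAdef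
  have hA : A * A = (3 : ℚ) • A := by
    ext i j
    have h1 := congrArg (fun N : Matrix ι ι ℤ => ((N i j : ℤ) : ℚ)) hM
    simp only [Matrix.mul_apply, Matrix.smul_apply, smul_eq_mul] at h1 ⊢
    push_cast at h1
    simpa [hAdef, Matrix.map_apply] using h1
  -- key : relation between trace and rank
  have key : ((Matrix.trace M : ℤ) : ℚ) = 3 * (A.rank : ℚ) := by
    set f := A.mulVecLin with hf
    have hmul : f ∘ₗ f = (3:ℚ) • f := by
      rw [hf, ← Matrix.mulVecLin_mul, hA]
      ext x i
      simp [Matrix.smul_mulVec]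
    set g : (ι → ℚ) →ₗ[ℚ] (ι → ℚ) := (3:ℚ)⁻¹ • f with hg
    have hgg : g ∘ₗ g = g := by
      rw [hg, LinearMap.smul_comp, LinearMap.comp_smul, hmul, smul_smul, smul_smul]
      norm_num
    obtain ⟨p, hp⟩ := (LinearMap.isProj_iff_isIdempotentElem g).mpr hgg
    have hrange : LinearMap.range g = p := by
      apply le_antisymm
      · rintro x ⟨y, rfl⟩; exact hp.map_mem y
      · intro x hx; exact ⟨x, hp.map_id x hx⟩
    have htr : LinearMap.trace ℚ (ι → ℚ) g = (Module.finrank ℚ p : ℚ) := hp.trace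
    have hrank : A.rank = Module.finrank ℚ p := by
      rw [Matrix.rank, ← hrange, hg,
        LinearMap.range_smul _ _ (by norm_num : (3:ℚ)⁻¹ ≠ 0)]
    have htrf : LinearMap.trace ℚ (ι → ℚ) f = Matrix.trace A := by
      rw [LinearMap.trace_eq_matrix_trace ℚ (Pi.basisFun ℚ ι), LinearMap.toMatrix_eq_toMatrix',
        hf, ← Matrix.toLin'_apply', LinearMap.toMatrix'_toLin']
    have htrg : LinearMap.trace ℚ (ι → ℚ) g = (3:ℚ)⁻¹ * Matrix.trace A := by
      rw [hg, map_smul, htrf, smul_eq_mul]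
    have hAtr : Matrix.trace A = ((Matrix.trace M : ℤ) : ℚ) := by
      simp only [Matrix.trace, Matrix.diag, hAdef, Matrix.map_apply]
      push_cast
      rfl
    rw [hrank]
    rw [← htr, htrg, hAtr]
    ring
  -- entry-wise equation
  have hMij : ∀ i j, ∑ l, M i l * M l j = 3 * M i j := by
    intro i j
    have := congrArg (fun N : Matrix ι ι ℤ => N i j) hM
    simpa [Matrix.mul_apply] using this
  set k := Fintype.card ι with hk
  have hdiag : ∀ i, M i i * M i i + ((k - 1 : ℕ) : ℤ) ≤ 3 * M i i := by
    intro i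
    rw [← hMij i i, ← Finset.add_sum_erase _ _ (Finset.mem_univ i)]
    have h1 := Finset.card_nsmul_le_sum (Finset.univ.erase i)
      (fun l => M i l * M l i) 1 (fun l _ => by show (1:ℤ) ≤ M i l * M l i; nlinarith [hpos i l, hpos l i])
    simp only [nsmul_eq_mul, mul_one] at h1
    have h2 : (Finset.univ.erase i).card = k - 1 := by
      rw [Finset.card_erase_of_mem (Finset.mem_univ i), Finset.card_univ]
    rw [h2] at h1
    linarith
  have hpair : ∀ i j, i ≠ j →
      (M i i + M j j) * M i j + ((k - 2 : ℕ) : ℤ) ≤ 3 * M i j := by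
    intro i j hij
    rw [← hMij i j, ← Finset.add_sum_erase _ _ (Finset.mem_univ i),
      ← Finset.add_sum_erase _ _ (Finset.mem_erase.mpr ⟨Ne.symm hij, Finset.mem_univ j⟩)]
    have h1 := Finset.card_nsmul_le_sum ((Finset.univ.erase i).erase j)
      (fun l => M i l * M l j) 1 (fun l _ => by show (1:ℤ) ≤ M i l * M l j; nlinarith [hpos i l, hpos l j])
    simp only [nsmul_eq_mul, mul_one] at h1
    have h2 : ((Finset.univ.erase i).erase j).card = k - 2 := by
      rw [Finset.card_erase_of_mem (Finset.mem_erase.mpr ⟨Ne.symm hij, Finset.mem_univ j⟩),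
        Finset.card_erase_of_mem (Finset.mem_univ i), Finset.card_univ]
      omega
    rw [h2] at h1
    linarith
  -- trace ≤ 3
  have htr3 : Matrix.trace M ≤ 3 := by
    rcases Nat.lt_or_ge k 2 with hk1 | hk2
    · -- card = 1
      have hk1' : k = 1 := le_antisymm (by omega) Fintype.card_pos
      obtain ⟨i, hi⟩ := Fintype.card_eq_one_iff.mp hk1'
      have htr : Matrix.trace M = M i i := by
        rw [Matrix.trace, Finset.sum_eq_single i (fun b _ hb => absurd (hi b) hb)
          (fun h => absurd (Finset.mem_univ i) h)]
        rfl
      have hd := hdiag i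
      rw [hk1'] at hd
      simp only [Nat.sub_self, Nat.cast_zero, add_zero] at hd
      nlinarith [hpos i i]
    · obtain ⟨i, j, hij⟩ := Fintype.exists_pair_of_one_lt_card hk2
      have hp := hpair i j hij
      have hcast : (0:ℤ) ≤ ((k - 2 : ℕ) : ℤ) := Int.natCast_nonneg _
      have hsum3 : M i i + M j j ≤ 3 := by nlinarith [hpos i j]
      rcases Nat.lt_or_ge k 3 with hk2' | hk3
      · -- card = 2
        have hk2'' : k = 2 := by omega
        have huniv : (Finset.univ : Finset ι) = {i, j} := by
          symm
          apply Finset.eq_of_subset_of_card_le (Finset.subset_univ _)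
          rw [Finset.card_univ, Finset.card_insert_of_notMem (by simp [hij]),
            Finset.card_singleton]
          omega
        have htr : Matrix.trace M = M i i + M j j := by
          rw [Matrix.trace, huniv, Finset.sum_pair hij]
          rfl
        omega
      · -- card ≥ 3
        have hall1 : ∀ l, M l l = 1 := by
          intro l
          obtain ⟨m, hm⟩ := Fintype.exists_ne_of_one_lt_card hk2 l
          have hp' := hpair l m (Ne.symm hm)
          have h1 : (1:ℤ) ≤ ((k - 2 : ℕ) : ℤ) := by
            have : 1 ≤ k - 2 := by omega
            exact_mod_cast this
          nlinarith [hpos l m, hpos l l, hpos m m]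
        have htr : Matrix.trace M = (k : ℤ) := by
          rw [Matrix.trace]
          simp only [Matrix.diag]
          rw [Finset.sum_congr rfl (fun l _ => hall1 l)]
          simp [hk]
        have hd := hdiag i
        rw [hall1 i] at hd
        have h1 : ((k - 1 : ℕ) : ℤ) = (k : ℤ) - 1 := by
          have : 1 ≤ k := by omega
          omega
        rw [h1] at hd
        omega
  -- trace ≥ 1
  have htrpos : 1 ≤ Matrix.trace M := by
    have h1 := Finset.card_nsmul_le_sum Finset.univ (fun l => M l l) 1
      (fun l _ => hpos l l)
    simp only [nsmul_eq_mul, mul_one, Finset.card_univ] at h1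
    have h2 : (1:ℤ) ≤ (Fintype.card ι : ℤ) := by exact_mod_cast Fintype.card_pos
    simpa [Matrix.trace, Matrix.diag] using le_trans h2 h1
  have keyZ : Matrix.trace M = 3 * (A.rank : ℤ) := by exact_mod_cast key
  constructor
  · omega
  · omega
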